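/- If f ∈ C(K) is real-valued and Φ(f_U) ≥ f_U on U, then the sequence {Ψ^n(f)}_{n≥1} is monotone increasing and converges uniformly on K to a function g ∈ C(K) which satisfies Φ(g_U) = g_U on U and g(x) = f(x) for all x ∈ ∂U. -/

import Mathlib

open MeasureTheory Filter Topology ComplexOrder

/-- `Φ` is a Markov operator on the bounded Borel measurable functions on `U`:
for each `x` there is a Borel probability measure `P x` representing `Φ` at `x`. -/
def IsMarkovOperator {U : Type*} [MeasurableSpace U]
    (Φ : (U → ℂ) → (U → ℂ)) : Prop :=
  ∀ x : U, ∃ P : Measure U, IsProbabilityMeasure P ∧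
    ∀ f : U → ℂ, Measurable f → (∃ C : ℝ, ∀ y, ‖f y‖ ≤ C) →
      Φ f x = ∫ y, f y ∂P

/-- `Φ` has the strong Feller property: it maps bounded Borel measurable
functions to continuous functions. -/
def HasStrongFeller {U : Type*} [MeasurableSpace U] [TopologicalSpace U]
    (Φ : (U → ℂ) → (U → ℂ)) : Prop :=
  ∀ f : U → ℂ, Measurable f → (∃ C : ℝ, ∀ y, ‖f y‖ ≤ C) → Continuous (Φ f)

/-- Boundary condition (A): for each boundary point `x` there is a barrier
`h ∈ C(K)` with `h x = 0`, `h < 0` off `x`, and `Φ (h_U) ≥ h_U` on `U`. -/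
def CondA {K : Type*} [TopologicalSpace K] (U : Set K)
    (Φ : (↥U → ℂ) → (↥U → ℂ)) : Prop :=
  ∀ x ∈ Uᶜ, ∃ h : C(K, ℂ), h x = 0 ∧ (∀ y : K, y ≠ x → h y < 0) ∧
    ∀ u : ↥U, h u.1 ≤ Φ (fun v : ↥U => h v.1) u

/-- Maximum principle (B): every real-valued `g ∈ C(K)` with `Φ (g_U) ≥ g_U`
on `U` attaining its global maximum inside `U` is constant. -/
def CondB {K : Type*} [TopologicalSpace K] (U : Set K)
    (Φ : (↥U → ℂ) → (↥U → ℂ)) : Prop :=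
  ∀ g : C(K, ℂ), (∀ x : K, (g x).im = 0) →
    (∀ u : ↥U, g u.1 ≤ Φ (fun v : ↥U => g v.1) u) →
    (∃ z ∈ U, ∀ x : K, g x ≤ g z) →
    ∀ x y : K, g x = g y

/-- The map `Ψ` : `Ψ f = Φ (f_U)` on `U` and `Ψ f = f` on `∂U = K \ U`. -/
noncomputable def psiFun {K : Type*} (U : Set K)
    (Φ : (↥U → ℂ) → (↥U → ℂ)) (f : K → ℂ) : K → ℂ :=
  open Classical in fun x => if hx : x ∈ U then Φ (fun v : ↥U => f v.1) ⟨x, hx⟩ else f x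


set_option linter.unusedSectionVars false

section PhiBasic

variable {α : Type*} [MeasurableSpace α] {Φ : (α → ℂ) → (α → ℂ)}

lemma bdd_integrable {u : α → ℂ} (hu : Measurable u) (hub : ∃ C : ℝ, ∀ y, ‖u y‖ ≤ C)
    (P : Measure α) [IsProbabilityMeasure P] : Integrable u P := by
  obtain ⟨C, hC⟩ := hub
  exact (integrable_const C).mono' hu.aestronglyMeasurable (ae_of_all _ hC)

lemma integral_re' {u : α → ℂ} (P : Measure α) (hu : Integrable u P) :
    ∫ y, (u y).re ∂P = (∫ y, u y ∂P).re := by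
  have := _root_.integral_re (μ := P) hu
  simpa [RCLike.re_eq_complex_re] using this

lemma integral_im' {u : α → ℂ} (P : Measure α) (hu : Integrable u P) :
    ∫ y, (u y).im ∂P = (∫ y, u y ∂P).im := by
  have := _root_.integral_im (μ := P) hu
  simpa [RCLike.im_eq_complex_im] using this

lemma phi_mono (hM : IsMarkovOperator Φ) {u v : α → ℂ}
    (hu : Measurable u) (hub : ∃ C : ℝ, ∀ y, ‖u y‖ ≤ C)
    (hv : Measurable v) (hvb : ∃ C : ℝ, ∀ y, ‖v y‖ ≤ C)
    (huv : ∀ y, u y ≤ v y) (x : α) : Φ u x ≤ Φ v x := by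
  obtain ⟨P, hP, hrep⟩ := hM x
  rw [hrep u hu hub, hrep v hv hvb]
  have hiu : Integrable u P := bdd_integrable hu hub P
  have hiv : Integrable v P := bdd_integrable hv hvb P
  rw [Complex.le_def]
  constructor
  · rw [← integral_re' P hiu, ← integral_re' P hiv]
    exact integral_mono hiu.re hiv.re fun y => (Complex.le_def.1 (huv y)).1
  · rw [← integral_im' P hiu, ← integral_im' P hiv]
    exact integral_congr_ae (ae_of_all _ fun y => (Complex.le_def.1 (huv y)).2)

lemma phi_im (hM : IsMarkovOperator Φ) {u : α → ℂ}
    (hu : Measurable u) (hub : ∃ C : ℝ, ∀ y, ‖u y‖ ≤ C)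
    (him : ∀ y, (u y).im = 0) (x : α) : (Φ u x).im = 0 := by
  obtain ⟨P, hP, hrep⟩ := hM x
  rw [hrep u hu hub, ← integral_im' P (bdd_integrable hu hub P)]
  simp [him]

lemma phi_norm_le (hM : IsMarkovOperator Φ) {u : α → ℂ} {C : ℝ}
    (hu : Measurable u) (hub : ∀ y, ‖u y‖ ≤ C) (x : α) : ‖Φ u x‖ ≤ C := by
  obtain ⟨P, hP, hrep⟩ := hM x
  rw [hrep u hu ⟨C, hub⟩]
  calc ‖∫ y, u y ∂P‖ ≤ ∫ y, ‖u y‖ ∂P := norm_integral_le_integral_norm u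
    _ ≤ ∫ _, C ∂P := integral_mono (bdd_integrable hu ⟨C, hub⟩ P).norm (integrable_const C) hub
    _ = C := by simp

lemma phi_barrier_upper (hM : IsMarkovOperator Φ) {u h : α → ℂ} {t c : ℝ}
    (hu : Measurable u) (hub : ∃ C : ℝ, ∀ y, ‖u y‖ ≤ C)
    (hh : Measurable h) (hhb : ∃ C : ℝ, ∀ y, ‖h y‖ ≤ C)
    (hineq : ∀ y, (u y).re ≤ c - t * (h y).re) (x : α) :
    (Φ u x).re ≤ c - t * (Φ h x).re := by
  obtain ⟨P, hP, hrep⟩ := hM x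
  rw [hrep u hu hub, hrep h hh hhb]
  have hiu : Integrable u P := bdd_integrable hu hub P
  have hih : Integrable h P := bdd_integrable hh hhb P
  have hiure : Integrable (fun y => (u y).re) P := hiu.re
  have hihre : Integrable (fun y => (h y).re) P := hih.re
  rw [← integral_re' P hiu, ← integral_re' P hih]
  calc ∫ y, (u y).re ∂P ≤ ∫ y, (c - t * (h y).re) ∂P :=
        integral_mono hiure ((integrable_const c).sub (hihre.const_mul t)) hineq
    _ = c - t * ∫ y, (h y).re ∂P := by
        rw [integral_sub (integrable_const c) (hihre.const_mul t), integral_const,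
          integral_const_mul]
        simp

lemma phi_barrier_lower (hM : IsMarkovOperator Φ) {u h : α → ℂ} {t c : ℝ}
    (hu : Measurable u) (hub : ∃ C : ℝ, ∀ y, ‖u y‖ ≤ C)
    (hh : Measurable h) (hhb : ∃ C : ℝ, ∀ y, ‖h y‖ ≤ C)
    (hineq : ∀ y, c + t * (h y).re ≤ (u y).re) (x : α) :
    c + t * (Φ h x).re ≤ (Φ u x).re := by
  obtain ⟨P, hP, hrep⟩ := hM x
  rw [hrep u hu hub, hrep h hh hhb]
  have hiu : Integrable u P := bdd_integrable hu hub P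
  have hih : Integrable h P := bdd_integrable hh hhb P
  have hiure : Integrable (fun y => (u y).re) P := hiu.re
  have hihre : Integrable (fun y => (h y).re) P := hih.re
  rw [← integral_re' P hiu, ← integral_re' P hih]
  calc c + t * ∫ y, (h y).re ∂P = ∫ y, (c + t * (h y).re) ∂P := by
        rw [integral_add (integrable_const c) (hihre.const_mul t), integral_const,
          integral_const_mul]
        simp
    _ ≤ ∫ y, (u y).re ∂P :=
        integral_mono ((integrable_const c).add (hihre.const_mul t)) hiure hineq

end PhiBasic

section KLevel

variable {K : Type*} [MetricSpace K] [CompactSpace K]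

lemma cont_bdd {φ : K → ℂ} (hc : Continuous φ) : ∃ C : ℝ, ∀ y, ‖φ y‖ ≤ C := by
  obtain ⟨C, hC⟩ := (isCompact_range hc.norm).bddAbove
  exact ⟨C, fun y => hC (Set.mem_range_self y)⟩

lemma barrier_im {x : K} {h : C(K, ℂ)} (hhx : h x = 0)
    (hneg : ∀ y : K, y ≠ x → h y < 0) : ∀ y : K, (h y).im = 0 := by
  intro y
  by_cases hy : y = x
  · rw [hy, hhx]; rfl
  · have := (Complex.lt_def.1 (hneg y hy)).2
    simpa using this

lemma barrier_re_nonpos {x : K} {h : C(K, ℂ)} (hhx : h x = 0)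
    (hneg : ∀ y : K, y ≠ x → h y < 0) : ∀ y : K, (h y).re ≤ 0 := by
  intro y
  by_cases hy : y = x
  · rw [hy, hhx]; rfl
  · have := (Complex.lt_def.1 (hneg y hy)).1
    simp only [Complex.zero_re] at this
    exact this.le

lemma exists_t {φ : K → ℂ} (hc : Continuous φ) (x : K) {ε : ℝ} (hε : 0 < ε)
    {h : C(K, ℂ)} (hhx : h x = 0) (hneg : ∀ y : K, y ≠ x → h y < 0) :
    ∃ t : ℝ, 0 ≤ t ∧ ∀ y : K, (φ y).re ≤ (φ x).re + ε - t * (h y).re := by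
  have hle := barrier_re_nonpos hhx hneg
  set N : Set K := {y | (φ y).re < (φ x).re + ε} with hN
  have hNopen : IsOpen N := isOpen_lt (Complex.continuous_re.comp hc) continuous_const
  have hxN : x ∈ N := by simp [hN]; linarith
  by_cases hS : (Nᶜ : Set K).Nonempty
  · have hScomp : IsCompact (Nᶜ : Set K) := hNopen.isClosed_compl.isCompact
    obtain ⟨z, hzS, hzmax⟩ := hScomp.exists_isMaxOn hS
      ((Complex.continuous_re.comp h.continuous).continuousOn)
    have hzx : z ≠ x := by rintro rfl; exact hzS hxN
    have hδpos : 0 < -(h z).re := by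
      have := (Complex.lt_def.1 (hneg z hzx)).1
      simp only [Complex.zero_re] at this; linarith
    set δ : ℝ := -(h z).re with hδ
    obtain ⟨C, hC⟩ := (isCompact_range (Complex.continuous_re.comp hc)).bddAbove
    have hCb : ∀ y : K, (φ y).re ≤ C := fun y => hC (Set.mem_range_self y)
    refine ⟨max 0 ((C - (φ x).re - ε) / δ), le_max_left _ _, fun y => ?_⟩
    set t := max 0 ((C - (φ x).re - ε) / δ) with htdef
    have ht0 : 0 ≤ t := le_max_left _ _
    by_cases hyN : y ∈ N
    · have h1 : (φ y).re < (φ x).re + ε := hyN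
      have h2 : t * (h y).re ≤ 0 := mul_nonpos_of_nonneg_of_nonpos ht0 (hle y)
      linarith
    · have h1 : (h y).re ≤ (h z).re := hzmax hyN
      have h2 : (C - (φ x).re - ε) / δ ≤ t := le_max_right _ _
      have h3 : C - (φ x).re - ε ≤ t * δ := (div_le_iff₀ hδpos).1 h2
      have h4 : t * (h y).re ≤ t * (-δ) := by
        apply mul_le_mul_of_nonneg_left _ ht0
        simp only [hδ, neg_neg]
        exact h1
      have h5 : (φ y).re ≤ C := hCb y
      have h6 : t * (-δ) = -(t * δ) := by ring
      linarith
  · rw [Set.not_nonempty_iff_eq_empty] at hS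
    refine ⟨0, le_refl 0, fun y => ?_⟩
    have hyN : y ∈ N := by
      by_contra hcon
      exact absurd hS (Set.nonempty_iff_ne_empty.1 ⟨y, hcon⟩)
    have : (φ y).re < (φ x).re + ε := hyN
    linarith

end KLevel

section PsiLevel
variable {K : Type*} [MetricSpace K] [CompactSpace K] [MeasurableSpace K] [BorelSpace K]
variable {U : Set K} {Φ : (↥U → ℂ) → (↥U → ℂ)}

lemma restr_meas {φ : K → ℂ} (hm : Measurable φ) : Measurable fun v : ↥U => φ v.1 :=
  hm.comp measurable_subtype_coe

lemma restr_bdd {φ : K → ℂ} (hb : ∃ C : ℝ, ∀ y, ‖φ y‖ ≤ C) :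
    ∃ C : ℝ, ∀ v : ↥U, ‖φ v.1‖ ≤ C := by
  obtain ⟨C, hC⟩ := hb; exact ⟨C, fun v => hC v.1⟩

lemma psi_apply_mem {φ : K → ℂ} {y : K} (hy : y ∈ U) :
    psiFun U Φ φ y = Φ (fun v : ↥U => φ v.1) ⟨y, hy⟩ := dif_pos hy

lemma psi_apply_nmem {φ : K → ℂ} {y : K} (hy : y ∉ U) : psiFun U Φ φ y = φ y := dif_neg hy

lemma psi_im (hM : IsMarkovOperator Φ) {φ : K → ℂ} (hm : Measurable φ)
    (hb : ∃ C : ℝ, ∀ y, ‖φ y‖ ≤ C) (him : ∀ y, (φ y).im = 0) :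
    ∀ y, (psiFun U Φ φ y).im = 0 := by
  intro y
  by_cases hy : y ∈ U
  · rw [psi_apply_mem hy]
    exact phi_im hM (restr_meas hm) (restr_bdd hb) (fun v => him v.1) _
  · rw [psi_apply_nmem hy]; exact him y

lemma psi_norm (hM : IsMarkovOperator Φ) {φ : K → ℂ} {C : ℝ} (hm : Measurable φ)
    (hb : ∀ y, ‖φ y‖ ≤ C) : ∀ y, ‖psiFun U Φ φ y‖ ≤ C := by
  intro y
  by_cases hy : y ∈ U
  · rw [psi_apply_mem hy]
    exact phi_norm_le hM (restr_meas hm) (fun v => hb v.1) _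
  · rw [psi_apply_nmem hy]; exact hb y

lemma psi_mono (hM : IsMarkovOperator Φ) {φ φ' : K → ℂ}
    (hm : Measurable φ) (hb : ∃ C : ℝ, ∀ y, ‖φ y‖ ≤ C)
    (hm' : Measurable φ') (hb' : ∃ C : ℝ, ∀ y, ‖φ' y‖ ≤ C)
    (hle : ∀ y, φ y ≤ φ' y) : ∀ y, psiFun U Φ φ y ≤ psiFun U Φ φ' y := by
  intro y
  by_cases hy : y ∈ U
  · rw [psi_apply_mem hy, psi_apply_mem hy]
    exact phi_mono hM (restr_meas hm) (restr_bdd hb) (restr_meas hm') (restr_bdd hb')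
      (fun v => hle v.1) _
  · rw [psi_apply_nmem hy, psi_apply_nmem hy]; exact hle y

lemma psi_le_barrier (hM : IsMarkovOperator Φ) {φ : K → ℂ}
    (hm : Measurable φ) (hb : ∃ C : ℝ, ∀ y, ‖φ y‖ ≤ C)
    {h : C(K, ℂ)} (hΦh : ∀ u : ↥U, h u.1 ≤ Φ (fun v : ↥U => h v.1) u)
    {t c : ℝ} (ht : 0 ≤ t) (hineq : ∀ y : K, (φ y).re ≤ c - t * (h y).re) :
    ∀ y : K, (psiFun U Φ φ y).re ≤ c - t * (h y).re := by
  intro y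
  by_cases hy : y ∈ U
  · rw [psi_apply_mem hy]
    have h1 := phi_barrier_upper hM (restr_meas hm) (restr_bdd hb)
      (restr_meas h.continuous.measurable) (restr_bdd (cont_bdd h.continuous))
      (fun v => hineq v.1) (⟨y, hy⟩ : ↥U)
    have h2 : (h y).re ≤ (Φ (fun v : ↥U => h v.1) ⟨y, hy⟩).re :=
      (Complex.le_def.1 (hΦh ⟨y, hy⟩)).1
    have h3 := mul_le_mul_of_nonneg_left h2 ht
    linarith
  · rw [psi_apply_nmem hy]; exact hineq y

lemma psi_ge_barrier (hM : IsMarkovOperator Φ) {φ : K → ℂ}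
    (hm : Measurable φ) (hb : ∃ C : ℝ, ∀ y, ‖φ y‖ ≤ C)
    {h : C(K, ℂ)} (hΦh : ∀ u : ↥U, h u.1 ≤ Φ (fun v : ↥U => h v.1) u)
    {t c : ℝ} (ht : 0 ≤ t) (hineq : ∀ y : K, c + t * (h y).re ≤ (φ y).re) :
    ∀ y : K, c + t * (h y).re ≤ (psiFun U Φ φ y).re := by
  intro y
  by_cases hy : y ∈ U
  · rw [psi_apply_mem hy]
    have h1 := phi_barrier_lower hM (restr_meas hm) (restr_bdd hb)
      (restr_meas h.continuous.measurable) (restr_bdd (cont_bdd h.continuous))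
      (fun v => hineq v.1) (⟨y, hy⟩ : ↥U)
    have h2 : (h y).re ≤ (Φ (fun v : ↥U => h v.1) ⟨y, hy⟩).re :=
      (Complex.le_def.1 (hΦh ⟨y, hy⟩)).1
    have h3 := mul_le_mul_of_nonneg_left h2 ht
    linarith
  · rw [psi_apply_nmem hy]; exact hineq y

lemma psi_continuousOn (hSF : HasStrongFeller Φ) {φ : K → ℂ}
    (hm : Measurable φ) (hb : ∃ C : ℝ, ∀ y, ‖φ y‖ ≤ C) :
    ContinuousOn (psiFun U Φ φ) U := by
  rw [continuousOn_iff_continuous_restrict]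
  have heq : U.restrict (psiFun U Φ φ) = Φ (fun v : ↥U => φ v.1) := by
    funext v
    exact dif_pos v.2
  change Continuous (U.restrict (psiFun U Φ φ))
  rw [heq]
  exact hSF _ (restr_meas hm) (restr_bdd hb)

lemma psi_continuous (hUopen : IsOpen U) (hM : IsMarkovOperator Φ)
    (hSF : HasStrongFeller Φ) (hA : CondA U Φ) {φ : K → ℂ}
    (hc : Continuous φ) (him : ∀ y, (φ y).im = 0) :
    Continuous (psiFun U Φ φ) := by
  have hm : Measurable φ := hc.measurable
  have hb : ∃ C : ℝ, ∀ y, ‖φ y‖ ≤ C := cont_bdd hc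
  rw [continuous_iff_continuousAt]
  intro x
  by_cases hx : x ∈ U
  · exact (psi_continuousOn hSF hm hb).continuousAt (hUopen.mem_nhds hx)
  · have hψim : ∀ y, (psiFun U Φ φ y).im = 0 := psi_im hM hm hb him
    rw [ContinuousAt, Metric.tendsto_nhds]
    intro ε hε
    have hδ : 0 < ε / 4 := by positivity
    obtain ⟨h, hhx, hneg, hΦh⟩ := hA x hx
    obtain ⟨t₁, ht₁, hup⟩ := exists_t hc x hδ hhx hneg
    obtain ⟨t₂, ht₂, hlow'⟩ := exists_t (hc.neg) x hδ hhx hneg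
    have hlow : ∀ y : K, ((φ x).re - ε / 4) + t₂ * (h y).re ≤ (φ y).re := by
      intro y
      have := hlow' y
      simp only [Pi.neg_apply, Complex.neg_re] at this
      linarith
    have hupψ := psi_le_barrier hM hm hb hΦh ht₁ hup
    have hlowψ := psi_ge_barrier hM hm hb hΦh ht₂ hlow
    set r : ℝ := (ε / 4) / (t₁ + t₂ + 1) with hrdef
    have hrpos : 0 < r := by positivity
    have hmulr : (t₁ + t₂ + 1) * r = ε / 4 := by
      rw [hrdef]; field_simp
    have hcont : Tendsto (fun y => (h y).re) (𝓝 x) (𝓝 0) := by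
      have := (Complex.continuous_re.comp h.continuous).continuousAt (x := x)
      simpa [ContinuousAt, hhx, Function.comp_def] using this
    have ev1 : ∀ᶠ y in 𝓝 x, |(h y).re| < r := by
      have := Metric.tendsto_nhds.1 hcont r hrpos
      simpa [Real.dist_eq] using this
    have ev2 : ∀ᶠ y in 𝓝 x, dist (φ y) (φ x) < ε := by
      exact Metric.tendsto_nhds.1 hc.continuousAt ε hε
    filter_upwards [ev1, ev2] with y h1 h2
    by_cases hy : y ∈ U
    · have hdist : dist (psiFun U Φ φ y) (psiFun U Φ φ x) =
          |(psiFun U Φ φ y).re - (psiFun U Φ φ x).re| := by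
        rw [Complex.dist_of_im_eq (by rw [hψim, hψim]), Real.dist_eq]
      rw [hdist, psi_apply_nmem hx]
      have e1 : t₁ * -((h y).re) ≤ t₁ * r :=
        mul_le_mul_of_nonneg_left (by cases abs_lt.1 h1 with | intro a b => linarith) ht₁
      rw [mul_neg] at e1
      have e2 : t₂ * -((h y).re) ≤ t₂ * r :=
        mul_le_mul_of_nonneg_left (by cases abs_lt.1 h1 with | intro a b => linarith) ht₂
      rw [mul_neg] at e2
      have e3 : t₁ * r ≤ ε / 4 := by
        calc t₁ * r ≤ (t₁ + t₂ + 1) * r :=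
              mul_le_mul_of_nonneg_right (by linarith) hrpos.le
          _ = ε / 4 := hmulr
      have e4 : t₂ * r ≤ ε / 4 := by
        calc t₂ * r ≤ (t₁ + t₂ + 1) * r :=
              mul_le_mul_of_nonneg_right (by linarith) hrpos.le
          _ = ε / 4 := hmulr
      have e5 := hupψ y
      have e6 := hlowψ y
      rw [abs_sub_lt_iff]
      constructor <;> linarith
    · rw [psi_apply_nmem hy, psi_apply_nmem hx]
      exact h2

end PsiLevel

/-- If `f ∈ C(K)` is real-valued and `Φ (f_U) ≥ f_U` on `U`,
then `{Ψⁿ f}_{n≥1}` is monotone increasing and converges uniformly on `K`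
to some `g ∈ C(K)` with `Φ (g_U) = g_U` on `U` and `g = f` on `∂U`. -/
theorem stmt6 {K : Type*} [MetricSpace K] [CompactSpace K]
    [MeasurableSpace K] [BorelSpace K]
    (U : Set K) (hUopen : IsOpen U) (hUdense : Dense U)
    (hbd : ∃ a b : K, a ∈ Uᶜ ∧ b ∈ Uᶜ ∧ a ≠ b)
    (Φ : (↥U → ℂ) → (↥U → ℂ))
    (hM : IsMarkovOperator Φ) (hSF : HasStrongFeller Φ)
    (hA : CondA U Φ)
    (f : C(K, ℂ)) (hreal : ∀ x : K, (f x).im = 0)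
    (hsub : ∀ u : ↥U, f u.1 ≤ Φ (fun v : ↥U => f v.1) u) :
    (∀ n : ℕ, 1 ≤ n → ∀ x : K,
        (psiFun U Φ)^[n] ⇑f x ≤ (psiFun U Φ)^[n + 1] ⇑f x) ∧
    ∃ g : C(K, ℂ),
      TendstoUniformly (fun n x => (psiFun U Φ)^[n] ⇑f x) (⇑g) atTop ∧
      (∀ u : ↥U, Φ (fun v : ↥U => g v.1) u = g u.1) ∧
      (∀ x ∈ Uᶜ, g x = f x) := by
  classical
  set F : ℕ → K → ℂ := fun n => (psiFun U Φ)^[n] ⇑f with hF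
  have hFsucc : ∀ n, F (n + 1) = psiFun U Φ (F n) := fun n =>
    Function.iterate_succ_apply' _ _ _
  obtain ⟨C₀, hC₀⟩ := cont_bdd f.continuous
  have hInv : ∀ n, Continuous (F n) ∧ (∀ y, (F n y).im = 0) ∧ (∀ y, ‖F n y‖ ≤ C₀) ∧
      (∀ y, y ∉ U → F n y = f y) := by
    intro n
    induction n with
    | zero => exact ⟨f.continuous, hreal, hC₀, fun y _ => rfl⟩
    | succ n ih =>
      obtain ⟨hc, him, hbd', hbdry⟩ := ih
      have hm := hc.measurable
      have hb : ∃ C : ℝ, ∀ y, ‖F n y‖ ≤ C := ⟨C₀, hbd'⟩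
      refine ⟨?_, ?_, ?_, ?_⟩ <;> rw [hFsucc n]
      · exact psi_continuous hUopen hM hSF hA hc him
      · exact psi_im hM hm hb him
      · exact psi_norm hM hm hbd'
      · intro y hy; rw [psi_apply_nmem hy]; exact hbdry y hy
  have hFcont : ∀ n, Continuous (F n) := fun n => (hInv n).1
  have hFim : ∀ n y, (F n y).im = 0 := fun n => (hInv n).2.1
  have hFC : ∀ n y, ‖F n y‖ ≤ C₀ := fun n => (hInv n).2.2.1
  have hFbdry : ∀ n y, y ∉ U → F n y = f y := fun n => (hInv n).2.2.2
  have hmono : ∀ n y, F n y ≤ F (n + 1) y := by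
    intro n
    induction n with
    | zero =>
      intro y
      rw [hFsucc 0]
      by_cases hy : y ∈ U
      · rw [psi_apply_mem hy]; exact hsub ⟨y, hy⟩
      · rw [psi_apply_nmem hy]
    | succ n ih =>
      have step := psi_mono hM (hFcont n).measurable ⟨C₀, hFC n⟩
        (hFcont (n + 1)).measurable ⟨C₀, hFC (n + 1)⟩ ih
      intro y
      have := step y
      rwa [← hFsucc n, ← hFsucc (n + 1)] at this
  have hre_mono : ∀ y, Monotone fun n => (F n y).re := fun y =>
    monotone_nat_of_le_succ fun n => (Complex.le_def.1 (hmono n y)).1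
  have habs_re : ∀ n y, |(F n y).re| ≤ C₀ := fun n y => by
    calc |(F n y).re| ≤ ‖F n y‖ := Complex.abs_re_le_norm _
      _ ≤ C₀ := by exact hFC n y
  have hre_bdd : ∀ y n, (F n y).re ≤ C₀ := fun y n => (abs_le.1 (habs_re n y)).2
  set gr : K → ℝ := fun y => ⨆ n, (F n y).re with hgrdef
  have hbddA : ∀ y, BddAbove (Set.range fun n => (F n y).re) := fun y =>
    ⟨C₀, by rintro _ ⟨n, rfl⟩; exact hre_bdd y n⟩
  have htend : ∀ y, Tendsto (fun n => (F n y).re) atTop (𝓝 (gr y)) := fun y =>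
    tendsto_atTop_ciSup (hre_mono y) (hbddA y)
  have hgr_le : ∀ y n, (F n y).re ≤ gr y := fun y n => le_ciSup (hbddA y) n
  have hgr_ub : ∀ y, gr y ≤ C₀ := fun y => ciSup_le (hre_bdd y)
  have hgr_lb : ∀ y, -C₀ ≤ gr y := fun y =>
    le_trans (abs_le.1 (habs_re 0 y)).1 (hgr_le y 0)
  set g : K → ℂ := fun y => ((gr y : ℝ) : ℂ) with hgdef
  have hgnorm : ∀ y, ‖g y‖ ≤ C₀ := by
    intro y
    rw [hgdef]
    simp only [Complex.norm_real, Real.norm_eq_abs]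
    exact abs_le.2 ⟨hgr_lb y, hgr_ub y⟩
  have hFeq : ∀ n y, F n y = (((F n y).re : ℝ) : ℂ) := fun n y => by
    apply Complex.ext <;> simp [hFim n y]
  have htendC : ∀ y, Tendsto (fun n => F n y) atTop (𝓝 (g y)) := by
    intro y
    have h1 := (Complex.continuous_ofReal.tendsto (gr y)).comp (htend y)
    exact Filter.Tendsto.congr (fun n => (hFeq n y).symm) h1
  have hgrmeas : Measurable gr :=
    measurable_of_tendsto_metrizable
      (fun n => Complex.measurable_re.comp (hFcont n).measurable)
      (tendsto_pi_nhds.2 htend)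
  have hgmeas : Measurable g := Complex.measurable_ofReal.comp hgrmeas
  have hgr_bdry : ∀ y, y ∉ U → gr y = (f y).re := by
    intro y hy
    rw [hgrdef]
    simp only
    have : (fun n => (F n y).re) = fun _ => (f y).re :=
      funext fun n => by rw [hFbdry n y hy]
    rw [this, ciSup_const]
  have hgbdry : ∀ y, y ∉ U → g y = f y := by
    intro y hy
    rw [hgdef]
    simp only [hgr_bdry y hy]
    apply Complex.ext <;> simp [hreal y]
  have key : ∀ (y : K) (hy : y ∈ U), Φ (fun v : ↥U => g v.1) ⟨y, hy⟩ = g y := by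
    intro y hy
    obtain ⟨P, hP, hrep⟩ := hM ⟨y, hy⟩
    rw [hrep _ (restr_meas hgmeas) (restr_bdd ⟨C₀, hgnorm⟩)]
    have hDC : Tendsto (fun n => ∫ v, F n v.1 ∂P) atTop (𝓝 (∫ v, g v.1 ∂P)) := by
      apply tendsto_integral_of_dominated_convergence (fun _ => C₀)
      · exact fun n => (restr_meas (hFcont n).measurable).aestronglyMeasurable
      · exact integrable_const C₀
      · exact fun n => ae_of_all _ fun v => hFC n v.1
      · exact ae_of_all _ fun v => htendC v.1
    have heq : ∀ n, ∫ v, F n v.1 ∂P = F (n + 1) y := by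
      intro n
      rw [hFsucc n, psi_apply_mem hy,
        hrep _ (restr_meas (hFcont n).measurable) ⟨C₀, fun v => hFC n v.1⟩]
    have h2 : Tendsto (fun n => F (n + 1) y) atTop (𝓝 (g y)) :=
      (htendC y).comp (tendsto_add_atTop_nat 1)
    exact tendsto_nhds_unique (Filter.Tendsto.congr heq hDC) h2
  have hgcontU : ContinuousOn g U := by
    rw [continuousOn_iff_continuous_restrict]
    have heq : U.restrict g = Φ (fun v : ↥U => g v.1) := funext fun v => (key v.1 v.2).symm
    change Continuous (U.restrict g)
    rw [heq]
    exact hSF _ (restr_meas hgmeas) (restr_bdd ⟨C₀, hgnorm⟩)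
  have hgcont : Continuous g := by
    rw [continuous_iff_continuousAt]
    intro x
    by_cases hx : x ∈ U
    · exact hgcontU.continuousAt (hUopen.mem_nhds hx)
    · rw [ContinuousAt, Metric.tendsto_nhds]
      intro ε hε
      have hδ : 0 < ε / 4 := by positivity
      obtain ⟨h, hhx, hneg, hΦh⟩ := hA x hx
      obtain ⟨t, ht, hup⟩ := exists_t f.continuous x hδ hhx hneg
      have hubd : ∀ n y, (F n y).re ≤ (f x).re + ε / 4 - t * (h y).re := by
        intro n
        induction n with
        | zero => exact hup
        | succ n ih =>
          have step := psi_le_barrier hM (hFcont n).measurable ⟨C₀, hFC n⟩ hΦh ht ih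
          intro y
          rw [hFsucc n]
          exact step y
      have hgr_up : ∀ y, gr y ≤ (f x).re + ε / 4 - t * (h y).re := fun y =>
        ciSup_le fun n => hubd n y
      have hgr_lo : ∀ y : K, (f y).re ≤ gr y := fun y => hgr_le y 0
      have hgrx : gr x = (f x).re := hgr_bdry x hx
      set r : ℝ := (ε / 4) / (t + 1) with hrdef
      have hrpos : 0 < r := by positivity
      have hmulr : (t + 1) * r = ε / 4 := by rw [hrdef]; field_simp
      have hcont : Tendsto (fun y => (h y).re) (𝓝 x) (𝓝 0) := by
        have := (Complex.continuous_re.comp h.continuous).continuousAt (x := x)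
        simpa [ContinuousAt, hhx, Function.comp_def] using this
      have ev1 : ∀ᶠ y in 𝓝 x, |(h y).re| < r := by
        have := Metric.tendsto_nhds.1 hcont r hrpos
        simpa [Real.dist_eq] using this
      have ev2 : ∀ᶠ y in 𝓝 x, |(f y).re - (f x).re| < ε / 4 := by
        have hc2 : Tendsto (fun y => (f y).re) (𝓝 x) (𝓝 ((f x).re)) :=
          (Complex.continuous_re.comp f.continuous).continuousAt
        have := Metric.tendsto_nhds.1 hc2 (ε / 4) hδ
        simpa [Real.dist_eq] using this
      filter_upwards [ev1, ev2] with y h1 h2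
      have hdist : dist (g y) (g x) = |gr y - gr x| := by
        rw [Complex.dist_of_im_eq (by simp [hgdef])]
        simp [hgdef, Real.dist_eq]
      rw [hdist, hgrx]
      have e1 : t * -((h y).re) ≤ t * r :=
        mul_le_mul_of_nonneg_left (by cases abs_lt.1 h1 with | intro a b => linarith) ht
      rw [mul_neg] at e1
      have e3 : t * r ≤ ε / 4 := by
        calc t * r ≤ (t + 1) * r := mul_le_mul_of_nonneg_right (by linarith) hrpos.le
          _ = ε / 4 := hmulr
      have e5 := hgr_up y
      have e6 := hgr_lo y
      have h2' := abs_lt.1 h2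
      rw [abs_sub_lt_iff]
      constructor <;> linarith [h2'.1, h2'.2]
  have hUC : TendstoUniformly (fun n x => F n x) g atTop := by
    rw [Metric.tendstoUniformly_iff]
    intro ε hε
    set E : ℕ → Set K := fun n => {x | gr x - (F n x).re < ε} with hE
    have grcont : Continuous gr := by
      have h1 : ∀ x, (g x).re = gr x := fun x => by rw [hgdef]; simp
      exact (Complex.continuous_re.comp hgcont).congr h1
    have hEopen : ∀ n, IsOpen (E n) :=
      fun n => isOpen_lt (grcont.sub (Complex.continuous_re.comp (hFcont n)))
        continuous_const
    have hcov : ∀ x : K, ∃ n, x ∈ E n := by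
      intro x
      obtain ⟨n, hn⟩ := (Metric.tendsto_nhds.1 (htend x) ε hε).exists
      refine ⟨n, ?_⟩
      have := abs_lt.1 (by rwa [Real.dist_eq] at hn)
      simp only [hE, Set.mem_setOf_eq]
      linarith [this.1]
    have hmonoE : Monotone E := monotone_nat_of_le_succ fun n x hx => by
      have h1 := (Complex.le_def.1 (hmono n x)).1
      simp only [hE, Set.mem_setOf_eq] at hx ⊢
      linarith
    obtain ⟨s, hs⟩ := isCompact_univ.elim_finite_subcover E hEopen
      (fun x _ => Set.mem_iUnion.2 (hcov x))
    refine eventually_atTop.2 ⟨s.sup id, fun n hn x => ?_⟩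
    have hxE : x ∈ E (s.sup id) := by
      have hx := hs (Set.mem_univ x)
      rw [Set.mem_iUnion₂] at hx
      obtain ⟨i, hi, hxi⟩ := hx
      exact hmonoE (Finset.le_sup (f := id) hi) hxi
    have hxn : x ∈ E n := hmonoE hn hxE
    have h0 : (F n x).re ≤ gr x := hgr_le x n
    have hd : dist (g x) (F n x) = |gr x - (F n x).re| := by
      rw [Complex.dist_of_im_eq (by simp [hgdef, hFim n x])]
      simp [hgdef, Real.dist_eq]
    rw [hd, abs_of_nonneg (by linarith)]
    exact hxn
  refine ⟨fun n _ x => hmono n x, ⟨g, hgcont⟩, hUC, ?_, ?_⟩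
  · intro u
    exact key u.1 u.2
  · intro x hx
    exact hgbdry x hx
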